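/- arXiv:1805.02030 — 2 statements merged into one kernel-verified Lean document; each statement's English description precedes it below -/
import Mathlib

section
/- Let G = (Z/2)^n, and let I ⊂ Z/2[G] be the augmentation ideal (the kernel of the augmentation map Z/2[G] → Z/2 sending every group element to 1). Then the successive quotients I^p / I^{p+1} are isomorphic as Z/2-vector spaces to the p-th exterior power Λ^p((Z/2)^n); in particular dim_{Z/2}(I^p/I^{p+1}) = binom(n, p). -/
open Module
open Finset

noncomputable section

/-- The augmentation map `ℤ/2[G] → ℤ/2`, sending every group element to `1`. -/
def augMap (n : ℕ) :
    MonoidAlgebra (ZMod 2) (Multiplicative (Fin n → ZMod 2)) →ₐ[ZMod 2] ZMod 2 :=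
  (MonoidAlgebra.lift (ZMod 2) (ZMod 2) (Multiplicative (Fin n → ZMod 2))) 1

/-- The augmentation ideal `I ⊆ ℤ/2[G]` for `G = (ℤ/2)ⁿ`. -/
def augIdeal (n : ℕ) :
    Ideal (MonoidAlgebra (ZMod 2) (Multiplicative (Fin n → ZMod 2))) :=
  RingHom.ker (augMap n)

set_option synthInstance.maxHeartbeats 1000000
set_option maxHeartbeats 1000000

namespace Aug
abbrev A (n : ℕ) := MonoidAlgebra (ZMod 2) (Multiplicative (Fin n → ZMod 2))

def xS (n : ℕ) (S : Finset (Fin n)) : A n :=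
  MonoidAlgebra.of (ZMod 2) (Multiplicative (Fin n → ZMod 2))
    (Multiplicative.ofAdd (∑ i ∈ S, Pi.single i 1))

def e (n : ℕ) (i : Fin n) : A n := xS n {i} + 1

def b (n : ℕ) (S : Finset (Fin n)) : A n := ∏ i ∈ S, e n i

instance (n : ℕ) : FiniteDimensional (ZMod 2) (A n) :=
  Module.Finite.of_basis (MonoidAlgebra.basis _ (ZMod 2))

lemma addself (n : ℕ) (x : A n) : x + x = 0 := by
  have : x + x = ((1 : ZMod 2) + 1) • x := by rw [add_smul, one_smul]
  rw [this, show ((1:ZMod 2)+1) = 0 by decide, zero_smul]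

lemma xS_mul (n : ℕ) (S T : Finset (Fin n)) (h : Disjoint S T) :
    xS n S * xS n T = xS n (S ∪ T) := by
  unfold xS
  rw [← map_mul, ← ofAdd_add, Finset.sum_union h]

lemma e_sq (n : ℕ) (i : Fin n) : e n i * e n i = 0 := by
  have h1 : xS n {i} * xS n {i} = 1 := by
    unfold xS
    rw [← map_mul, ← ofAdd_add, Finset.sum_singleton, ← Pi.single_add,
      show ((1:ZMod 2)+1) = 0 by decide]
    simp [MonoidAlgebra.of_apply]
    rfl
  unfold e
  ring_nf
  rw [sq, h1, mul_two, addself, add_zero, addself]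

lemma b_empty (n : ℕ) : b n ∅ = 1 := Finset.prod_empty

lemma b_mul_disj (n : ℕ) {S T : Finset (Fin n)} (h : Disjoint S T) :
    b n S * b n T = b n (S ∪ T) := (Finset.prod_union h).symm

lemma b_mul_nondisj (n : ℕ) {S T : Finset (Fin n)} (h : ¬ Disjoint S T) :
    b n S * b n T = 0 := by
  rw [Finset.not_disjoint_iff] at h
  obtain ⟨i, hiS, hiT⟩ := h
  unfold b
  rw [← Finset.mul_prod_erase _ _ hiS, ← Finset.mul_prod_erase _ _ hiT,
    show (e n i * ∏ x ∈ S.erase i, e n x) * (e n i * ∏ x ∈ T.erase i, e n x)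
      = (e n i * e n i) * ((∏ x ∈ S.erase i, e n x) * ∏ x ∈ T.erase i, e n x) by ring,
    e_sq, zero_mul]

lemma b_expand (n : ℕ) (S : Finset (Fin n)) :
    b n S = ∑ T ∈ S.powerset, xS n T := by
  unfold b e
  rw [Finset.prod_add]
  apply Finset.sum_congr
  · simp [Finset.powerset]
  · intro T hT
    rw [Finset.prod_const_one, mul_one]
    unfold xS
    rw [← map_prod, ← ofAdd_sum]
    congr 1
    exact congrArg Multiplicative.ofAdd
      (Finset.sum_congr rfl fun i _ => Finset.sum_singleton _ _)

lemma xS_mem_span (n : ℕ) (S : Finset (Fin n)) :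
    xS n S ∈ Submodule.span (ZMod 2) (Set.range (b n)) := by
  induction S using Finset.strongInduction with
  | _ S ih =>
    have h : xS n S = b n S - ∑ T ∈ S.powerset.erase S, xS n T := by
      rw [b_expand, ← Finset.add_sum_erase _ (xS n) (Finset.mem_powerset_self S)]
      abel
    rw [h]
    refine sub_mem (Submodule.subset_span ⟨S, rfl⟩) (Submodule.sum_mem _ fun T hT => ?_)
    rw [Finset.mem_erase, Finset.mem_powerset] at hT
    exact ih T (lt_of_le_of_ne hT.2 hT.1)

lemma span_b_top (n : ℕ) : Submodule.span (ZMod 2) (Set.range (b n)) = ⊤ := by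
  rw [eq_top_iff]
  have hb : Submodule.span (ZMod 2)
      (Set.range (MonoidAlgebra.basis _ (ZMod 2) :
        Basis (Multiplicative (Fin n → ZMod 2)) (ZMod 2) (A n))) = ⊤ :=
    Basis.span_eq _
  rw [← hb, Submodule.span_le]
  rintro - ⟨g, rfl⟩
  -- `g : Multiplicative (Fin n → ZMod 2)`; realize it as `xS n S`
  have h3 : Multiplicative.toAdd g
      = ∑ i ∈ {i | Multiplicative.toAdd g i = 1}.toFinset, Pi.single i 1 := by
    funext j
    rw [Finset.sum_apply]
    simp only [Finset.sum_pi_single]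
    by_cases h : Multiplicative.toAdd g j = 1
    · rw [if_pos (by simpa using h), h]
    · rw [if_neg (by simpa using h)]
      exact (by decide : ∀ x : ZMod 2, x ≠ 1 → x = 0) _ h
  have hg : g = Multiplicative.ofAdd
      (∑ i ∈ {i | Multiplicative.toAdd g i = 1}.toFinset, Pi.single i 1) :=
    congrArg Multiplicative.ofAdd h3
  have : (MonoidAlgebra.basis _ (ZMod 2) :
      Basis (Multiplicative (Fin n → ZMod 2)) (ZMod 2) (A n)) g
      = xS n {i | Multiplicative.toAdd g i = 1}.toFinset := by
    rw [MonoidAlgebra.basis_apply]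
    unfold xS
    rw [← hg]
    rfl
  rw [this]
  exact xS_mem_span n _

lemma card_finset_eq_finrank (n : ℕ) :
    Fintype.card (Finset (Fin n)) = finrank (ZMod 2) (A n) := by
  have : finrank (ZMod 2) (A n)
      = Fintype.card (Multiplicative (Fin n → ZMod 2)) :=
    Module.finrank_eq_card_basis (MonoidAlgebra.basis _ (ZMod 2))
  rw [this]
  simp [Fintype.card_finset]

def bBasis (n : ℕ) : Basis (Finset (Fin n)) (ZMod 2) (A n) :=
  basisOfTopLeSpanOfCardEqFinrank (b n) (span_b_top n).ge (card_finset_eq_finrank n)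

lemma b_indep (n : ℕ) : LinearIndependent (ZMod 2) (b n) := by
  have := (bBasis n).linearIndependent
  rwa [bBasis, coe_basisOfTopLeSpanOfCardEqFinrank] at this

/-- The span of the `b S` with `p ≤ |S|`. -/
def W (n p : ℕ) : Submodule (ZMod 2) (A n) :=
  Submodule.span (ZMod 2) (b n '' {S | p ≤ S.card})

lemma W_zero (n : ℕ) : W n 0 = ⊤ := by
  rw [W, show {S : Finset (Fin n) | 0 ≤ S.card} = Set.univ from
    Set.eq_univ_of_forall fun S => Nat.zero_le _, Set.image_univ, span_b_top]

lemma W_mul (n : ℕ) {p q : ℕ} {x y : A n} (hx : x ∈ W n p) (hy : y ∈ W n q) :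
    x * y ∈ W n (p + q) := by
  have hle : W n p * W n q ≤ W n (p + q) := by
    rw [W, W, Submodule.span_mul_span, Submodule.span_le]
    rintro - ⟨-, ⟨S, hS, rfl⟩, -, ⟨T, hT, rfl⟩, rfl⟩
    show b n S * b n T ∈ (W n (p + q) : Set (A n))
    by_cases h : Disjoint S T
    · rw [b_mul_disj n h]
      exact Submodule.subset_span ⟨S ∪ T, by
        have := Finset.card_union_of_disjoint h
        simp only [Set.mem_setOf_eq, this]
        exact Nat.add_le_add hS hT, rfl⟩
    · rw [b_mul_nondisj n h]
      exact zero_mem _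
  exact hle (Submodule.mul_mem_mul hx hy)

def idealW (n p : ℕ) : Ideal (A n) where
  carrier := W n p
  add_mem' := fun h1 h2 => add_mem h1 h2
  zero_mem' := zero_mem _
  smul_mem' := fun a x hx => by
    have ha : a ∈ W n 0 := by rw [W_zero]; trivial
    have := W_mul n ha hx
    rwa [Nat.zero_add] at this

lemma mem_idealW (n p : ℕ) (x : A n) : x ∈ idealW n p ↔ x ∈ W n p := Iff.rfl

lemma e_mem_aug (n : ℕ) (i : Fin n) : e n i ∈ augIdeal n := by
  have h1 : augMap n (xS n {i}) = 1 := by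
    unfold xS
    rw [augMap, MonoidAlgebra.lift_of]
    rfl
  rw [augIdeal, RingHom.mem_ker]
  show augMap n (e n i) = 0
  rw [e, map_add, map_one, h1]
  decide

lemma b_mem_pow (n : ℕ) (S : Finset (Fin n)) : b n S ∈ (augIdeal n) ^ S.card := by
  induction S using Finset.cons_induction with
  | empty => rw [b_empty]; simp [Ideal.one_eq_top]
  | cons a S ha ih =>
    rw [Finset.card_cons, b, Finset.prod_cons, ← b, pow_succ']
    exact Ideal.mul_mem_mul (e_mem_aug n a) ih

lemma aug_b (n : ℕ) {S : Finset (Fin n)} (hS : S.Nonempty) : augMap n (b n S) = 0 := by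
  rw [b, map_prod]
  obtain ⟨i, hi⟩ := hS
  refine Finset.prod_eq_zero hi ?_
  have := e_mem_aug n i
  rwa [augIdeal, RingHom.mem_ker] at this

lemma aug_ker_le_W_one (n : ℕ) : (augIdeal n : Set (A n)) ⊆ (W n 1 : Set (A n)) := by
  intro x hx
  have hsup : W n 1 ⊔ Submodule.span (ZMod 2) {(1 : A n)} = ⊤ := by
    rw [eq_top_iff, ← span_b_top n, Submodule.span_le]
    rintro - ⟨S, rfl⟩
    rcases S.eq_empty_or_nonempty with rfl | hS
    · rw [b_empty]
      exact Submodule.mem_sup_right (Submodule.subset_span rfl)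
    · exact Submodule.mem_sup_left (Submodule.subset_span ⟨S, hS.card_pos, rfl⟩)
  have hx' : x ∈ W n 1 ⊔ Submodule.span (ZMod 2) {(1 : A n)} := by rw [hsup]; trivial
  obtain ⟨w, hw, z, hz, rfl⟩ := Submodule.mem_sup.mp hx'
  obtain ⟨c, rfl⟩ := Submodule.mem_span_singleton.mp hz
  have haugw : augMap n w = 0 := by
    have hle : W n 1 ≤ LinearMap.ker ((augMap n).toLinearMap) := by
      rw [W, Submodule.span_le]
      rintro - ⟨S, hS, rfl⟩
      rw [SetLike.mem_coe, LinearMap.mem_ker]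
      exact aug_b n (Finset.card_pos.mp hS)
    exact hle hw
  have h0 : augMap n (w + c • 1) = c := by
    rw [map_add, haugw, map_smul, map_one, zero_add, smul_eq_mul, mul_one]
  have hc : c = 0 := by
    rw [← h0]
    exact RingHom.mem_ker.mp hx
  rw [hc, zero_smul, add_zero]
  exact hw

lemma pow_le_idealW (n p : ℕ) : (augIdeal n) ^ p ≤ idealW n p := by
  induction p with
  | zero =>
    intro x _
    rw [mem_idealW, W_zero]; trivial
  | succ p ih =>
    rw [pow_succ]
    refine Ideal.mul_le.mpr fun r hr s hs => ?_
    exact W_mul n (ih hr) (aug_ker_le_W_one n hs)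

lemma restrict_pow_eq_W (n p : ℕ) :
    Submodule.restrictScalars (ZMod 2) ((augIdeal n) ^ p) = W n p := by
  apply le_antisymm
  · intro x hx
    exact pow_le_idealW n p hx
  · rw [W, Submodule.span_le]
    rintro - ⟨S, hS, rfl⟩
    have h1 : (augIdeal n) ^ S.card ≤ (augIdeal n) ^ p :=
      Ideal.pow_le_pow_right hS
    exact h1 (b_mem_pow n S)

lemma finrank_W (n p : ℕ) :
    finrank (ZMod 2) (W n p) = Fintype.card {S : Finset (Fin n) // p ≤ S.card} := by
  have himg : b n '' {S | p ≤ S.card}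
      = Set.range (fun S : {S : Finset (Fin n) // p ≤ S.card} => b n S.1) :=
    Set.image_eq_range _ _
  rw [W, himg]
  exact finrank_span_eq_card ((b_indep n).comp Subtype.val Subtype.val_injective)

lemma card_split (n p : ℕ) :
    Fintype.card {S : Finset (Fin n) // p ≤ S.card}
      = n.choose p + Fintype.card {S : Finset (Fin n) // p + 1 ≤ S.card} := by
  rw [Fintype.card_subtype, Fintype.card_subtype]
  have hsplit : (Finset.univ.filter fun S : Finset (Fin n) => p ≤ S.card)
      = (Finset.univ.filter fun S : Finset (Fin n) => S.card = p)
        ∪ (Finset.univ.filter fun S : Finset (Fin n) => p + 1 ≤ S.card) := by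
    rw [← Finset.filter_or]
    apply Finset.filter_congr
    intro S _
    constructor
    · intro h
      rcases eq_or_lt_of_le h with h' | h'
      · exact Or.inl h'.symm
      · exact Or.inr h'
    · rintro (h | h)
      · exact h.ge
      · exact Nat.le_of_succ_le h
  rw [hsplit, Finset.card_union_of_disjoint,
    show (Finset.univ.filter fun S : Finset (Fin n) => S.card = p)
        = Finset.powersetCard p Finset.univ by
      rw [Finset.powersetCard_eq_filter, Finset.powerset_univ],
    Finset.card_powersetCard]
  · simp
  · rw [Finset.disjoint_filter]
    intro S _ h1 h2
    omega

-- Exterior algebra side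
abbrev M (n : ℕ) := Fin n → ZMod 2
abbrev E (n : ℕ) := ExteriorAlgebra (ZMod 2) (M n)

def eF (n : ℕ) : M n →ₗ[ZMod 2] A n :=
  (Pi.basisFun (ZMod 2) (Fin n)).constr (ZMod 2) (e n)

instance (n : ℕ) : CharP (A n) 2 :=
  charP_of_injective_algebraMap' (ZMod 2) (A := A n) 2

lemma eF_sq (n : ℕ) (m : M n) : eF n m * eF n m = 0 := by
  have hm : eF n m = ∑ i, m i • e n i := by
    rw [eF, Basis.constr_apply_fintype]
    simp [Pi.basisFun_equivFun]
  haveI : ExpChar (A n) 2 := ExpChar.prime Nat.prime_two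
  rw [← sq, hm, sum_pow_char]
  refine Finset.sum_eq_zero fun i _ => ?_
  rw [smul_pow, sq, sq, e_sq, smul_zero]

def F (n : ℕ) : E n →ₐ[ZMod 2] A n :=
  ExteriorAlgebra.lift (ZMod 2) ⟨eF n, eF_sq n⟩

lemma F_ι (n : ℕ) (m : M n) : F n (ExteriorAlgebra.ι (ZMod 2) m) = eF n m :=
  ExteriorAlgebra.lift_ι_apply _ _ _ _

lemma eF_single (n : ℕ) (i : Fin n) : eF n (Pi.single i 1) = e n i := by
  have : (Pi.single i 1 : M n) = Pi.basisFun (ZMod 2) (Fin n) i := by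
    simp [Pi.basisFun_apply]
  rw [this, eF, Basis.constr_basis]

/-- the canonical monomials of degree `p` -/
def mfam (n p : ℕ) (S : {S : Finset (Fin n) // S.card = p}) : E n :=
  ExteriorAlgebra.ιMulti (ZMod 2) p
    (fun j => Pi.single ((S.1.orderIsoOfFin S.2 j : Fin n)) 1)

lemma F_mfam (n p : ℕ) (S : {S : Finset (Fin n) // S.card = p}) :
    F n (mfam n p S) = b n S.1 := by
  rw [mfam, ExteriorAlgebra.ιMulti_apply, map_list_prod, List.map_ofFn, List.prod_ofFn]
  simp only [Function.comp_apply, F_ι, eF_single]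
  rw [b, ← Finset.prod_coe_sort S.1 (e n)]
  exact Fintype.prod_equiv (S.1.orderIsoOfFin S.2).toEquiv _ _ (fun j => rfl)

lemma neg_eq_self_E (n : ℕ) (x : E n) : -x = x := by
  have h : x + x = 0 := by
    have : x + x = ((1 : ZMod 2) + 1) • x := by rw [add_smul, one_smul]
    rw [this, show ((1:ZMod 2)+1) = 0 by decide, zero_smul]
  exact neg_eq_of_add_eq_zero_left h

lemma mem_span_mfam (n p : ℕ) (f : Fin p → M n) :
    ExteriorAlgebra.ιMulti (ZMod 2) p f
      ∈ Submodule.span (ZMod 2) (Set.range (mfam n p)) := by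
  have hf : f = fun i => ∑ j : Fin n, f i j • Pi.single j (1 : ZMod 2) := by
    funext i k
    rw [Finset.sum_apply]
    simp [Pi.single_apply, Finset.sum_ite_eq]
  have hexp := (ExteriorAlgebra.ιMulti (ZMod 2) p
      (M := M n)).toMultilinearMap.map_sum
      (g := fun i j => f i j • Pi.single j (1 : ZMod 2))
  rw [show (ExteriorAlgebra.ιMulti (ZMod 2) p f : E n)
      = (ExteriorAlgebra.ιMulti (ZMod 2) p (M := M n)).toMultilinearMap
        (fun i => ∑ j : Fin n, f i j • Pi.single j (1 : ZMod 2)) by rw [← hf]; rfl,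
    hexp]
  refine Submodule.sum_mem _ fun r _ => ?_
  rw [MultilinearMap.map_smul_univ]
  refine Submodule.smul_mem _ _ ?_
  rw [show (((ExteriorAlgebra.ιMulti (ZMod 2) p (M := M n)).toMultilinearMap)
      fun i => Pi.single (r i) (1 : ZMod 2))
    = ExteriorAlgebra.ιMulti (ZMod 2) p (fun i => Pi.single (r i) (1 : ZMod 2)) from rfl]
  by_cases hr : Function.Injective r
  · set S : Finset (Fin n) := Finset.univ.image r with hSdef
    have hS : S.card = p := by
      rw [hSdef, Finset.card_image_of_injective _ hr, Finset.card_univ, Fintype.card_fin]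
    set σ := S.orderIsoOfFin hS with hσ
    have hmem : ∀ i, r i ∈ S := fun i => Finset.mem_image_of_mem r (Finset.mem_univ i)
    set r' : Fin p → {x // x ∈ S} := fun i => ⟨r i, hmem i⟩ with hr'def
    have hr' : Function.Injective r' := fun a b h => hr (congrArg Subtype.val h)
    have hbij : Function.Bijective r' :=
      (Fintype.bijective_iff_injective_and_card r').mpr
        ⟨hr', by rw [Fintype.card_coe, hS, Fintype.card_fin]⟩
    set π : Equiv.Perm (Fin p) := (Equiv.ofBijective r' hbij).trans σ.symm.toEquiv with hπ
    have hv : (fun i => (Pi.single (r i) 1 : M n))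
        = (fun j => (Pi.single ((σ j : Fin n)) 1 : M n)) ∘ π := by
      funext i
      have : σ (π i) = r' i := by
        rw [hπ]
        simp
      simp only [Function.comp_apply, this]
      rfl
    rw [hv, AlternatingMap.map_perm]
    have hmem2 : ExteriorAlgebra.ιMulti (ZMod 2) p
        (fun j => (Pi.single ((σ j : Fin n)) 1 : M n))
        ∈ Submodule.span (ZMod 2) (Set.range (mfam n p)) :=
      Submodule.subset_span ⟨⟨S, hS⟩, rfl⟩
    rcases Int.units_eq_one_or (Equiv.Perm.sign π) with h | h <;> rw [h]
    · rwa [one_smul]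
    · rw [Units.smul_def, show ((-1 : ℤˣ) : ℤ) = -1 from rfl, neg_smul, one_smul,
        neg_eq_self_E]
      exact hmem2
  · have hninj : ¬ Function.Injective (fun i => (Pi.single (r i) 1 : M n)) := by
      intro hinj
      exact hr fun a b hab => hinj (by simp only [hab])
    rw [AlternatingMap.map_eq_zero_of_not_injective _ _ hninj]
    exact zero_mem _

lemma span_mfam (n p : ℕ) :
    Submodule.span (ZMod 2) (Set.range (mfam n p)) = ⋀[ZMod 2]^p (M n) := by
  apply le_antisymm
  · rw [Submodule.span_le]
    rintro - ⟨S, rfl⟩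
    exact ExteriorAlgebra.ιMulti_range (ZMod 2) p ⟨_, rfl⟩
  · rw [← ExteriorAlgebra.ιMulti_span_fixedDegree, Submodule.span_le]
    rintro - ⟨f, rfl⟩
    exact mem_span_mfam n p f

lemma mfam_indep (n p : ℕ) : LinearIndependent (ZMod 2) (mfam n p) := by
  have hb : LinearIndependent (ZMod 2)
      (fun S : {S : Finset (Fin n) // S.card = p} => b n S.1) :=
    (b_indep n).comp Subtype.val Subtype.val_injective
  apply LinearIndependent.of_comp (F n).toLinearMap
  have h : ((F n).toLinearMap ∘ mfam n p)
      = fun S : {S : Finset (Fin n) // S.card = p} => b n S.1 :=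
    funext fun S => F_mfam n p S
  rwa [h]

lemma card_eq_p (n p : ℕ) :
    Fintype.card {S : Finset (Fin n) // S.card = p} = n.choose p := by
  rw [Fintype.card_subtype,
    show (Finset.univ.filter fun S : Finset (Fin n) => S.card = p)
        = Finset.powersetCard p Finset.univ by
      rw [Finset.powersetCard_eq_filter, Finset.powerset_univ],
    Finset.card_powersetCard]
  simp

lemma finrank_ext (n p : ℕ) :
    finrank (ZMod 2) (⋀[ZMod 2]^p (M n)) = n.choose p := by
  rw [← span_mfam, finrank_span_eq_card (mfam_indep n p), card_eq_p]

instance (n p : ℕ) : FiniteDimensional (ZMod 2) (⋀[ZMod 2]^p (M n)) :=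
  span_mfam n p ▸ FiniteDimensional.span_of_finite _ (Set.finite_range _)

end Aug

open Aug

/-- The `p`-th graded piece `I^p/I^{p+1}` of the augmentation filtration, as a
`ℤ/2`-vector space. -/
def augGraded (n p : ℕ) : Type :=
  ↥(Submodule.restrictScalars (ZMod 2) ((augIdeal n) ^ p)) ⧸
    Submodule.comap (Submodule.restrictScalars (ZMod 2) ((augIdeal n) ^ p)).subtype
      (Submodule.restrictScalars (ZMod 2) ((augIdeal n) ^ (p + 1)))

instance (n p : ℕ) : AddCommGroup (augGraded n p) :=
  inferInstanceAs (AddCommGroup (_ ⧸ _))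

instance (n p : ℕ) : Module (ZMod 2) (augGraded n p) :=
  inferInstanceAs (Module (ZMod 2) (_ ⧸ _))

/-- For `G = (ℤ/2)ⁿ` with augmentation ideal `I ⊂ ℤ/2[G]`, the successive
quotient `I^p/I^{p+1}` is isomorphic as a `ℤ/2`-vector space to the `p`-th exterior power
`Λ^p((ℤ/2)ⁿ)`; in particular `dim_{ℤ/2}(I^p/I^{p+1}) = binom(n,p)`. -/
theorem augGraded_iso_exteriorPower (n p : ℕ) :
    Nonempty (augGraded n p ≃ₗ[ZMod 2] ↥(⋀[ZMod 2]^p (Fin n → ZMod 2)))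
    ∧ finrank (ZMod 2) (augGraded n p) = n.choose p := by
  have hle : Submodule.restrictScalars (ZMod 2) ((augIdeal n) ^ (p+1))
      ≤ Submodule.restrictScalars (ZMod 2) ((augIdeal n) ^ p) :=
    fun x hx => (Ideal.pow_le_pow_right (Nat.le_succ p)) hx
  have hq := Submodule.finrank_quotient_add_finrank
    (Submodule.comap (Submodule.restrictScalars (ZMod 2) ((augIdeal n) ^ p)).subtype
      (Submodule.restrictScalars (ZMod 2) ((augIdeal n) ^ (p + 1))))
  have hC : finrank (ZMod 2)
        ↥(Submodule.comap (Submodule.restrictScalars (ZMod 2) ((augIdeal n) ^ p)).subtype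
          (Submodule.restrictScalars (ZMod 2) ((augIdeal n) ^ (p + 1))))
      = finrank (ZMod 2) ↥(Submodule.restrictScalars (ZMod 2) ((augIdeal n) ^ (p+1))) :=
    (LinearEquiv.finrank_eq (Submodule.comapSubtypeEquivOfLe hle))
  have hNp : ∀ k, finrank (ZMod 2)
        ↥(Submodule.restrictScalars (ZMod 2) ((augIdeal n) ^ k))
      = Fintype.card {S : Finset (Fin n) // k ≤ S.card} := fun k => by
    rw [restrict_pow_eq_W, finrank_W]
  rw [hC, hNp, hNp] at hq
  have hq' : finrank (ZMod 2) (augGraded n p)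
      + Fintype.card {S : Finset (Fin n) // p + 1 ≤ S.card}
      = Fintype.card {S : Finset (Fin n) // p ≤ S.card} := hq
  have hsplit := card_split n p
  have hrank : finrank (ZMod 2) (augGraded n p) = n.choose p := by omega
  haveI : FiniteDimensional (ZMod 2) (augGraded n p) :=
    inferInstanceAs (FiniteDimensional (ZMod 2)
      (↥(Submodule.restrictScalars (ZMod 2) ((augIdeal n) ^ p)) ⧸
        Submodule.comap (Submodule.restrictScalars (ZMod 2) ((augIdeal n) ^ p)).subtype
          (Submodule.restrictScalars (ZMod 2) ((augIdeal n) ^ (p + 1)))))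
  exact ⟨FiniteDimensional.nonempty_linearEquiv_of_finrank_eq
    (by rw [hrank, finrank_ext]), hrank⟩


end
end

section
/- The number of connected components of the complement in R^n of an arrangement of d hyperplanes in general position equals ∑_{k=0}^{n} binom(d, k). -/
open Module

namespace Arr

variable {V : Type} [AddCommGroup V] [Module ℝ V]

/-- Sign condition: `x` lies in the open region with sign vector `σ`. -/
def OK {d : ℕ} (f : Fin d → V →ₗ[ℝ] ℝ) (c : Fin d → ℝ) (σ : Fin d → Bool) (x : V) : Prop :=
  ∀ i, if σ i then c i < f i x else f i x < c i

def Realizable {d : ℕ} (f : Fin d → V →ₗ[ℝ] ℝ) (c : Fin d → ℝ) (σ : Fin d → Bool) : Prop :=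
  ∃ x, OK f c σ x

lemma exists_eps {d : ℕ} (a b : Fin d → ℝ) (ha : ∀ i, 0 < a i) :
    ∃ ε : ℝ, 0 < ε ∧ ∀ i, ε * |b i| < a i := by
  suffices h : ∀ s : Finset (Fin d), ∃ ε : ℝ, 0 < ε ∧ ∀ i ∈ s, ε * |b i| < a i by
    obtain ⟨ε, hε, h⟩ := h Finset.univ
    exact ⟨ε, hε, fun i => h i (Finset.mem_univ i)⟩
  intro s
  induction s using Finset.induction with
  | empty => exact ⟨1, one_pos, by simp⟩
  | @insert j s hj ih =>
    obtain ⟨ε, hε, h⟩ := ih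
    refine ⟨min ε (a j / (|b j| + 1)), lt_min hε (div_pos (ha j) (by positivity)), ?_⟩
    intro i hi
    rcases Finset.mem_insert.1 hi with rfl | hi
    · calc min ε (a i / (|b i| + 1)) * |b i| ≤ (a i / (|b i| + 1)) * |b i| := by
            apply mul_le_mul_of_nonneg_right (min_le_right _ _) (abs_nonneg _)
        _ < a i := by
            rw [div_mul_eq_mul_div, div_lt_iff₀ (by positivity)]
            nlinarith [abs_nonneg (b i), ha i]
    · calc min ε (a j / (|b j| + 1)) * |b i| ≤ ε * |b i| := by
            apply mul_le_mul_of_nonneg_right (min_le_left _ _) (abs_nonneg _)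
        _ < a i := h i hi

/-- Perturbation: moving a little inside a region stays in the region. -/
lemma perturb {d : ℕ} (f : Fin d → V →ₗ[ℝ] ℝ) (c : Fin d → ℝ) (σ : Fin d → Bool) (x v : V)
    (hx : OK f c σ x) : ∃ ε : ℝ, 0 < ε ∧ ∀ t : ℝ, |t| ≤ ε → OK f c σ (x + t • v) := by
  have hgap : ∀ i, 0 < |f i x - c i| := by
    intro i
    have := hx i
    rw [abs_pos]
    intro hc
    have hc' : f i x = c i := by linarith [sub_eq_zero.1 hc]
    rcases h : σ i with _ | _ <;> rw [h] at this <;> simp at this <;> linarith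
  obtain ⟨ε, hε, h⟩ := exists_eps (fun i => |f i x - c i|) (fun i => f i v) hgap
  refine ⟨ε, hε, fun t ht i => ?_⟩
  have h2 : |t * f i v| < |f i x - c i| := by
    rw [abs_mul]
    calc |t| * |f i v| ≤ ε * |f i v| := by
          apply mul_le_mul_of_nonneg_right ht (abs_nonneg _)
      _ < |f i x - c i| := h i
  have := hx i
  have hval : f i (x + t • v) = f i x + t * f i v := by simp
  rcases hσ : σ i with _ | _ <;> rw [hσ] at this <;> simp only [hσ, if_true, if_false,
    Bool.false_eq_true] at this ⊢
  · -- σ i = false : f i x < c i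
    rw [hval]
    have : |f i x - c i| = c i - f i x := by rw [abs_of_neg (by linarith)]; ring
    rw [this] at h2
    have := abs_lt.1 h2
    linarith [this.2]
  · rw [hval]
    have h3 : |f i x - c i| = f i x - c i := abs_of_pos (by linarith)
    rw [h3] at h2
    have := abs_lt.1 h2
    linarith [this.1]

end Arr

namespace Arr

variable {V : Type} [AddCommGroup V] [Module ℝ V]

lemma ok_snoc {d : ℕ} (f : Fin (d+1) → V →ₗ[ℝ] ℝ) (c : Fin (d+1) → ℝ)
    (τ : Fin d → Bool) (b : Bool) (x : V) :
    OK f c (Fin.snoc τ b) x ↔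
      (OK (fun i => f i.castSucc) (fun i => c i.castSucc) τ x ∧
        if b then c (Fin.last d) < f (Fin.last d) x else f (Fin.last d) x < c (Fin.last d)) := by
  constructor
  · intro h
    refine ⟨fun i => ?_, ?_⟩
    · have := h i.castSucc
      rwa [Fin.snoc_castSucc] at this
    · have := h (Fin.last d)
      rwa [Fin.snoc_last] at this
  · rintro ⟨h1, h2⟩ i
    induction i using Fin.lastCases with
    | last => rwa [Fin.snoc_last]
    | cast i => rw [Fin.snoc_castSucc]; exact h1 i

lemma snoc_restrict {d : ℕ} (σ : Fin (d+1) → Bool) :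
    Fin.snoc (fun i => σ i.castSucc) (σ (Fin.last d)) = σ := by
  funext i
  induction i using Fin.lastCases with
  | last => rw [Fin.snoc_last]
  | cast i => rw [Fin.snoc_castSucc]

section Step

variable {d : ℕ} (f : Fin (d+1) → V →ₗ[ℝ] ℝ) (c : Fin (d+1) → ℝ) (v₁ : V)

/-- If `τ` is realizable for the first `d` hyperplanes, it is realizable off the last one. -/
lemma exists_off (τ : Fin d → Bool)
    (hv₁ : f (Fin.last d) v₁ = 1)
    (h : Realizable (fun i => f i.castSucc) (fun i => c i.castSucc) τ) :
    ∃ x, OK (fun i => f i.castSucc) (fun i => c i.castSucc) τ x ∧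
      f (Fin.last d) x ≠ c (Fin.last d) := by
  obtain ⟨x, hx⟩ := h
  by_cases hlast : f (Fin.last d) x = c (Fin.last d)
  · obtain ⟨ε, hε, hp⟩ := perturb _ _ τ x v₁ hx
    refine ⟨x + ε • v₁, hp ε (by rw [abs_of_pos hε]), ?_⟩
    simp [hlast, hv₁]
    linarith
  · exact ⟨x, hx, hlast⟩

/-- Both extensions of `τ` are realizable iff the region of `τ` meets the last hyperplane. -/
lemma both_iff_meet (τ : Fin d → Bool) (hv₁ : f (Fin.last d) v₁ = 1) :
    (Realizable f c (Fin.snoc τ true) ∧ Realizable f c (Fin.snoc τ false)) ↔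
      ∃ z, OK (fun i => f i.castSucc) (fun i => c i.castSucc) τ z ∧
        f (Fin.last d) z = c (Fin.last d) := by
  constructor
  · rintro ⟨⟨x, hx⟩, ⟨y, hy⟩⟩
    rw [ok_snoc] at hx hy
    simp only [if_true, if_false, Bool.false_eq_true] at hx hy
    obtain ⟨hx1, hx2⟩ := hx
    obtain ⟨hy1, hy2⟩ := hy
    set L := f (Fin.last d)
    set t : ℝ := (L x - c (Fin.last d)) / (L x - L y) with ht
    have hden : 0 < L x - L y := by linarith
    have ht0 : 0 < t := div_pos (by linarith) hden
    have ht1 : t < 1 := by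
      rw [ht, div_lt_one hden]; linarith
    refine ⟨x + t • (y - x), ?_, ?_⟩
    · intro i
      have h1 := hx1 i
      have h2 := hy1 i
      have hval : f i.castSucc (x + t • (y - x))
          = (1 - t) * f i.castSucc x + t * f i.castSucc y := by
        simp only [map_add, map_smul, map_sub, smul_eq_mul]; ring
      rcases hσ : τ i with _ | _ <;> rw [hσ] at h1 h2 <;>
        simp only [if_true, if_false, Bool.false_eq_true] at h1 h2 ⊢ <;> rw [hval] <;> nlinarith
    · show L (x + t • (y - x)) = c (Fin.last d)
      have hv : L (x + t • (y - x)) = L x + t * (L y - L x) := by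
        simp only [map_add, map_smul, map_sub, smul_eq_mul]
      have hne : L x - L y ≠ 0 := ne_of_gt hden
      rw [hv, ht]
      field_simp
      ring
  · rintro ⟨z, hz, hzl⟩
    obtain ⟨ε, hε, hp⟩ := perturb _ _ τ z v₁ hz
    constructor
    · refine ⟨z + ε • v₁, ?_⟩
      rw [ok_snoc]
      refine ⟨hp ε (by rw [abs_of_pos hε]), ?_⟩
      simp [hzl, hv₁]; linarith
    · refine ⟨z + (-ε) • v₁, ?_⟩
      rw [ok_snoc]
      refine ⟨hp (-ε) (by rw [abs_neg, abs_of_pos hε]), ?_⟩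
      simp [hzl, hv₁]; linarith

end Step

end Arr

namespace Arr

lemma natcard_subtype {α : Type*} [Fintype α] (p : α → Prop) [DecidablePred p] :
    Nat.card {x // p x} = (Finset.univ.filter p).card := by
  rw [Nat.card_eq_fintype_card, Fintype.card_subtype]

lemma bool_filter_card (P : Bool → Prop) [DecidablePred P] (h : P true ∨ P false) :
    (Finset.univ.filter P).card = 1 + if P true ∧ P false then 1 else 0 := by
  have huniv : (Finset.univ : Finset Bool) = {true, false} := rfl
  rw [huniv]
  by_cases h1 : P true <;> by_cases h2 : P false <;>
    simp [Finset.filter_insert, Finset.filter_singleton, h1, h2] <;> tauto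

lemma sum_choose_split (m d : ℕ) :
    ∑ k ∈ Finset.range (m + 2), (d+1).choose k
      = ∑ k ∈ Finset.range (m + 2), d.choose k + ∑ k ∈ Finset.range (m + 1), d.choose k := by
  rw [Finset.sum_range_succ' (fun k => (d+1).choose k), Finset.sum_range_succ' (fun k => d.choose k)]
  simp only [Nat.choose_succ_succ, Nat.choose_zero_right]
  rw [Finset.sum_add_distrib]
  simp only [Nat.succ_eq_add_one]
  omega

end Arr

namespace Arr

open Module Finset

theorem count : ∀ (d : ℕ) (V : Type) [AddCommGroup V] [Module ℝ V] [FiniteDimensional ℝ V]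
    (f : Fin d → V →ₗ[ℝ] ℝ) (c : Fin d → ℝ),
    (∀ s : Finset (Fin d), s.card ≤ finrank ℝ V →
      ({x : V | ∀ i ∈ s, f i x = c i}.Nonempty ∧
        finrank ℝ ↥(⨅ i ∈ s, LinearMap.ker (f i)) = finrank ℝ V - s.card)) →
    (∀ s : Finset (Fin d), s.card = finrank ℝ V + 1 →
      {x : V | ∀ i ∈ s, f i x = c i} = ∅) →
    Nat.card {σ : Fin d → Bool // Realizable f c σ}
      = ∑ k ∈ Finset.range (finrank ℝ V + 1), d.choose k := by
  intro d
  induction d with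
  | zero =>
    intro V _ _ _ f c _ _
    have hl : Nat.card {σ : Fin 0 → Bool // Realizable f c σ} = 1 := by
      rw [Nat.card_eq_one_iff_unique]
      refine ⟨⟨fun a b => ?_⟩, ⟨⟨fun i => i.elim0, ⟨0, fun i => i.elim0⟩⟩⟩⟩
      ext i
      exact i.elim0
    have hr : ∑ k ∈ Finset.range (finrank ℝ V + 1), Nat.choose 0 k = 1 := by
      rw [Finset.sum_eq_single 0]
      · simp
      · intro k _ hk; exact Nat.choose_eq_zero_of_lt (Nat.pos_of_ne_zero hk)
      · simp
    rw [hl, hr]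
  | succ d ih =>
    intro V _ _ _ f c h1 h2
    classical
    rcases hn : finrank ℝ V with _ | m
    · -- zero-dimensional case
      have hsub : Subsingleton V := finrank_zero_iff.1 hn
      have hf0 : ∀ (i : Fin (d+1)) (x : V), f i x = 0 := by
        intro i x
        have : x = 0 := Subsingleton.elim x 0
        rw [this, map_zero]
      have hc : ∀ i : Fin (d+1), c i ≠ 0 := by
        intro i hci
        have := h2 {i} (by rw [hn]; simp)
        have h0 : (0 : V) ∈ {x : V | ∀ j ∈ ({i} : Finset (Fin (d+1))), f j x = c j} := by
          intro j hj
          rw [Finset.mem_singleton] at hj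
          rw [hj, hf0, hci]
        rw [this] at h0
        exact h0
      have hl : Nat.card {σ : Fin (d+1) → Bool // Realizable f c σ} = 1 := by
        rw [Nat.card_eq_one_iff_unique]
        constructor
        · constructor
          rintro ⟨σ, x, hx⟩ ⟨σ', y, hy⟩
          apply Subtype.ext
          funext i
          show σ i = σ' i
          have hxi := hx i
          have hyi := hy i
          rw [hf0] at hxi hyi
          rcases hσ : σ i with _ | _ <;> rcases hσ' : σ' i with _ | _ <;>
            rw [hσ] at hxi <;> rw [hσ'] at hyi <;>
            simp only [if_true, if_false, Bool.false_eq_true] at hxi hyi <;>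
            first
            | rw [hσ, hσ']
            | linarith
        · refine ⟨⟨fun i => decide (c i < 0), ⟨0, fun i => ?_⟩⟩⟩
          rw [hf0]
          rcases lt_or_gt_of_ne (hc i) with h | h
          · simp [h]
          · have hnot : ¬ (c i < 0) := not_lt.2 (le_of_lt h)
            simp [hnot, h]
      rw [hl]
      simp
    · -- positive-dimensional case
      -- data about the last hyperplane
      obtain ⟨⟨x₀, hx₀'⟩, hrk⟩ := h1 {Fin.last d} (by rw [hn]; simp)
      have hx₀ : f (Fin.last d) x₀ = c (Fin.last d) := hx₀' (Fin.last d) (Finset.mem_singleton_self _)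
      have hrk' : finrank ℝ ↥(LinearMap.ker (f (Fin.last d))) = m := by
        have he : (⨅ i ∈ ({Fin.last d} : Finset (Fin (d+1))), LinearMap.ker (f i))
            = LinearMap.ker (f (Fin.last d)) := by simp
        rw [he, hn] at hrk
        simpa using hrk
      -- a direction transverse to the last hyperplane
      have hv : ∃ v : V, f (Fin.last d) v ≠ 0 := by
        by_contra hcon
        push_neg at hcon
        have hker : LinearMap.ker (f (Fin.last d)) = ⊤ := by
          ext v; simp [LinearMap.mem_ker, hcon]
        rw [hker] at hrk'
        rw [finrank_top] at hrk'
        omega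
      obtain ⟨w, hw⟩ := hv
      have hv₁ : f (Fin.last d) ((f (Fin.last d) w)⁻¹ • w) = 1 := by
        rw [map_smul, smul_eq_mul, inv_mul_cancel₀ hw]
      set v₁ : V := (f (Fin.last d) w)⁻¹ • w
      have hinj := Fin.castSucc_injective d
      have hlastnotmem : ∀ s : Finset (Fin d), Fin.last d ∉ s.image Fin.castSucc := by
        intro s hmem
        rcases Finset.mem_image.1 hmem with ⟨i, _, hi⟩
        exact absurd hi (Fin.castSucc_lt_last i).ne
      have hcard' : ∀ s : Finset (Fin d),
          (insert (Fin.last d) (s.image Fin.castSucc)).card = s.card + 1 := by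
        intro s
        rw [Finset.card_insert_of_notMem (hlastnotmem s), Finset.card_image_of_injective _ hinj]
      -- induction hypothesis for the first d hyperplanes on V
      have hA : Nat.card {σ : Fin d → Bool //
          Realizable (fun i => f i.castSucc) (fun i => c i.castSucc) σ}
          = ∑ k ∈ Finset.range (m+2), d.choose k := by
        have e1 : ∀ s : Finset (Fin d),
            {x : V | ∀ i ∈ s, f i.castSucc x = c i.castSucc}
              = {x : V | ∀ j ∈ s.image Fin.castSucc, f j x = c j} := by
          intro s
          ext x
          simp [Finset.forall_mem_image]
        have hrkimg : ∀ s : Finset (Fin d),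
            (⨅ i ∈ s, LinearMap.ker (f i.castSucc))
              = ⨅ j ∈ s.image Fin.castSucc, LinearMap.ker (f j) := by
          intro s
          rw [← Finset.inf_eq_iInf, ← Finset.inf_eq_iInf, Finset.inf_image]
          rfl
        refine (ih V (fun i => f i.castSucc) (fun i => c i.castSucc) ?_ ?_).trans (by rw [hn])
        · intro s hs
          have hcard : (s.image Fin.castSucc).card ≤ finrank ℝ V := by
            rw [Finset.card_image_of_injective _ hinj]; exact hs
          obtain ⟨hne, hr⟩ := h1 _ hcard
          refine ⟨(e1 s) ▸ hne, ?_⟩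
          rw [hrkimg s, hr, Finset.card_image_of_injective _ hinj]
        · intro s hs
          have hcard : (s.image Fin.castSucc).card = finrank ℝ V + 1 := by
            rw [Finset.card_image_of_injective _ hinj]; exact hs
          rw [e1 s]
          exact h2 _ hcard
      -- the induced arrangement on the last hyperplane
      have hB : Nat.card {τ : Fin d → Bool //
          Realizable (fun i => (f i.castSucc).comp (LinearMap.ker (f (Fin.last d))).subtype)
            (fun i => c i.castSucc - f i.castSucc x₀) τ}
          = ∑ k ∈ Finset.range (m+1), d.choose k := by
        refine (ih ↥(LinearMap.ker (f (Fin.last d))) _ _ ?_ ?_).trans (by rw [hrk'])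
        · intro s hs
          rw [hrk'] at hs
          have hs'card := hcard' s
          have hs'le : (insert (Fin.last d) (s.image Fin.castSucc)).card ≤ finrank ℝ V := by
            rw [hs'card, hn]; omega
          obtain ⟨⟨y, hy⟩, hr⟩ := h1 _ hs'le
          have hylast : f (Fin.last d) y = c (Fin.last d) := hy _ (Finset.mem_insert_self _ _)
          constructor
          · have hmem : y - x₀ ∈ LinearMap.ker (f (Fin.last d)) := by
              rw [LinearMap.mem_ker, map_sub, hylast, hx₀, sub_self]
            refine ⟨⟨y - x₀, hmem⟩, fun i hi => ?_⟩
            show f i.castSucc (y - x₀) = c i.castSucc - f i.castSucc x₀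
            rw [map_sub, hy _ (Finset.mem_insert_of_mem (Finset.mem_image_of_mem _ hi))]
          · have hker : (⨅ i ∈ s, LinearMap.ker
                ((f i.castSucc).comp (LinearMap.ker (f (Fin.last d))).subtype))
                = Submodule.comap (LinearMap.ker (f (Fin.last d))).subtype
                    ((s.image Fin.castSucc).inf fun j => LinearMap.ker (f j)) := by
              ext v
              simp only [Submodule.mem_iInf, Submodule.mem_comap, Submodule.mem_finsetInf,
                LinearMap.mem_ker, LinearMap.comp_apply, Submodule.coe_subtype,
                Finset.forall_mem_image]
            have hWV : Submodule.comap (LinearMap.ker (f (Fin.last d))).subtype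
                  ((s.image Fin.castSucc).inf fun j => LinearMap.ker (f j))
                = Submodule.comap (LinearMap.ker (f (Fin.last d))).subtype
                  ((((s.image Fin.castSucc).inf fun j => LinearMap.ker (f j)))
                    ⊓ LinearMap.ker (f (Fin.last d))) := by
              ext v
              simp only [Submodule.mem_comap, Submodule.mem_inf]
              exact ⟨fun h => ⟨h, v.2⟩, fun h => h.1⟩
            have heq : finrank ℝ ↥(Submodule.comap (LinearMap.ker (f (Fin.last d))).subtype
                  ((((s.image Fin.castSucc).inf fun j => LinearMap.ker (f j)))
                    ⊓ LinearMap.ker (f (Fin.last d))))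
                = finrank ℝ ↥((((s.image Fin.castSucc).inf fun j => LinearMap.ker (f j)))
                    ⊓ LinearMap.ker (f (Fin.last d))) :=
              (Submodule.comapSubtypeEquivOfLe inf_le_right).finrank_eq
            have hint : (((s.image Fin.castSucc).inf fun j => LinearMap.ker (f j)))
                  ⊓ LinearMap.ker (f (Fin.last d))
                = ⨅ j ∈ insert (Fin.last d) (s.image Fin.castSucc), LinearMap.ker (f j) := by
              rw [← Finset.inf_eq_iInf, Finset.inf_insert, inf_comm]
            rw [hker, hWV, heq, hint, hr, hn, hcard' s, hrk']
            omega
        · intro s hs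
          rw [hrk'] at hs
          have hcard : (insert (Fin.last d) (s.image Fin.castSucc)).card = finrank ℝ V + 1 := by
            rw [hcard' s, hn]; omega
          have hemp := h2 _ hcard
          ext ⟨v, hv'⟩
          simp only [Set.mem_setOf_eq, Set.mem_empty_iff_false, iff_false]
          intro hall
          have hmem : x₀ + v ∈ {x : V | ∀ i ∈ insert (Fin.last d) (s.image Fin.castSucc),
              f i x = c i} := by
            intro j hj
            rcases Finset.mem_insert.1 hj with rfl | hj
            · rw [map_add, hx₀, LinearMap.mem_ker.1 hv', add_zero]
            · rcases Finset.mem_image.1 hj with ⟨i, hi, rfl⟩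
              have h' := hall i hi
              have h'' : f i.castSucc v = c i.castSucc - f i.castSucc x₀ := h'
              rw [map_add, h'']
              ring
          rw [hemp] at hmem
          exact hmem
      -- counting sign vectors
      classical
      have hsnocinj : ∀ τ : Fin d → Bool,
          Function.Injective (fun b : Bool => (Fin.snoc τ b : Fin (d+1) → Bool)) := by
        intro τ b b' h
        have := congrFun h (Fin.last d)
        simpa using this
      have hAB : ∀ σ ∈ Finset.univ.filter (fun σ : Fin (d+1) → Bool => Realizable f c σ),
          (fun i => σ i.castSucc) ∈ Finset.univ.filter
            (fun τ : Fin d → Bool =>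
              Realizable (fun i => f i.castSucc) (fun i => c i.castSucc) τ) := by
        intro σ hσ
        obtain ⟨x, hx⟩ := (Finset.mem_filter.1 hσ).2
        exact Finset.mem_filter.2 ⟨Finset.mem_univ _, ⟨x, fun i => hx i.castSucc⟩⟩
      have hfib := Finset.card_eq_sum_card_fiberwise hAB
      have hfibcard : ∀ τ ∈ Finset.univ.filter
            (fun τ : Fin d → Bool =>
              Realizable (fun i => f i.castSucc) (fun i => c i.castSucc) τ),
          ((Finset.univ.filter (fun σ : Fin (d+1) → Bool => Realizable f c σ)).filter
              (fun σ => (fun i => σ i.castSucc) = τ)).card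
            = 1 + if (Realizable f c (Fin.snoc τ true) ∧ Realizable f c (Fin.snoc τ false))
                then 1 else 0 := by
        intro τ hτ
        have hτ' := (Finset.mem_filter.1 hτ).2
        have himg : (Finset.univ.filter (fun σ : Fin (d+1) → Bool => Realizable f c σ)).filter
              (fun σ => (fun i => σ i.castSucc) = τ)
            = (Finset.univ.filter fun b : Bool => Realizable f c (Fin.snoc τ b)).image
                (fun b => Fin.snoc τ b) := by
          ext σ
          simp only [Finset.mem_filter, Finset.mem_image, Finset.mem_univ, true_and]
          constructor
          · rintro ⟨hσ, hres⟩
            refine ⟨σ (Fin.last d), ?_, ?_⟩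
            · rw [show (Fin.snoc τ (σ (Fin.last d)) : Fin (d+1) → Bool) = σ by
                rw [← hres]; exact snoc_restrict σ]
              exact hσ
            · rw [← hres]; exact snoc_restrict σ
          · rintro ⟨b, hb, rfl⟩
            refine ⟨hb, ?_⟩
            funext i
            simp
        rw [himg, Finset.card_image_of_injective _ (hsnocinj τ)]
        apply bool_filter_card
        · obtain ⟨x, hx, hne⟩ := exists_off f c v₁ τ hv₁ hτ'
          rcases lt_or_gt_of_ne hne with hlt | hgt
          · right
            exact ⟨x, (ok_snoc f c τ false x).2 ⟨hx, by simpa using hlt⟩⟩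
          · left
            exact ⟨x, (ok_snoc f c τ true x).2 ⟨hx, by simpa using hgt⟩⟩
      have hBC : (Finset.univ.filter
            (fun τ : Fin d → Bool =>
              Realizable (fun i => f i.castSucc) (fun i => c i.castSucc) τ)).filter
            (fun τ => Realizable f c (Fin.snoc τ true) ∧ Realizable f c (Fin.snoc τ false))
          = Finset.univ.filter (fun τ : Fin d → Bool =>
              Realizable (fun i => (f i.castSucc).comp (LinearMap.ker (f (Fin.last d))).subtype)
                (fun i => c i.castSucc - f i.castSucc x₀) τ) := by
        ext τ
        simp only [Finset.mem_filter, Finset.mem_univ, true_and]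
        constructor
        · rintro ⟨hτ, hboth⟩
          obtain ⟨z, hz, hzl⟩ := (both_iff_meet f c v₁ τ hv₁).1 hboth
          have hmem : z - x₀ ∈ LinearMap.ker (f (Fin.last d)) := by
            rw [LinearMap.mem_ker, map_sub, hzl, hx₀, sub_self]
          refine ⟨⟨z - x₀, hmem⟩, fun i => ?_⟩
          have hgv : (f i.castSucc).comp (LinearMap.ker (f (Fin.last d))).subtype ⟨z - x₀, hmem⟩
              = f i.castSucc z - f i.castSucc x₀ := by
            simp only [LinearMap.comp_apply, Submodule.coe_subtype, map_sub]
          have hzi := hz i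
          rcases hτi : τ i with _ | _ <;> rw [hτi] at hzi <;>
            simp only [if_true, if_false, Bool.false_eq_true, hgv] at hzi ⊢ <;> linarith
        · rintro ⟨⟨v, hvmem⟩, hv'⟩
          have hz : OK (fun i => f i.castSucc) (fun i => c i.castSucc) τ (x₀ + v) := by
            intro i
            have hvi := hv' i
            have hgv : (f i.castSucc).comp (LinearMap.ker (f (Fin.last d))).subtype ⟨v, hvmem⟩
                = f i.castSucc v := rfl
            rw [hgv] at hvi
            have hsum : f i.castSucc (x₀ + v) = f i.castSucc x₀ + f i.castSucc v := map_add _ _ _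
            rcases hτi : τ i with _ | _ <;> rw [hτi] at hvi <;>
              simp only [if_true, if_false, Bool.false_eq_true, hsum] at hvi ⊢ <;> linarith
          have hzl : f (Fin.last d) (x₀ + v) = c (Fin.last d) := by
            rw [map_add, hx₀, LinearMap.mem_ker.1 hvmem, add_zero]
          exact ⟨⟨x₀ + v, hz⟩, (both_iff_meet f c v₁ τ hv₁).2 ⟨x₀ + v, hz, hzl⟩⟩
      -- put it together
      rw [natcard_subtype, hfib]
      rw [Finset.sum_congr rfl hfibcard, Finset.sum_add_distrib, Finset.sum_const,
        smul_eq_mul, mul_one, ← Finset.card_filter, hBC]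
      rw [← natcard_subtype, ← natcard_subtype, hA, hB]
      exact (sum_choose_split m d).symm


end Arr

namespace Arr

open Module

theorem components_eq_signs (n d : ℕ) (f : Fin d → ((Fin n → ℝ) →ₗ[ℝ] ℝ)) (c : Fin d → ℝ) :
    Nat.card (ConnectedComponents ↥{x : Fin n → ℝ | ∀ i, f i x ≠ c i})
      = Nat.card {σ : Fin d → Bool // Realizable f c σ} := by
  set S : Set (Fin n → ℝ) := {x | ∀ i, f i x ≠ c i} with hS
  -- regions
  have hfc : ∀ i, Continuous (f i) := fun i => (f i).continuous_of_finiteDimensional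
  have hregionS : ∀ (σ : Fin d → Bool) (y : Fin n → ℝ), OK f c σ y → y ∈ S := by
    intro σ y hy i
    have := hy i
    rcases hσ : σ i with _ | _ <;> rw [hσ] at this <;>
      simp only [if_true, if_false, Bool.false_eq_true] at this
    · exact ne_of_lt this
    · exact (ne_of_lt this).symm
  have hopen : ∀ σ : Fin d → Bool, IsOpen {y : Fin n → ℝ | OK f c σ y} := by
    intro σ
    have : {y : Fin n → ℝ | OK f c σ y}
        = ⋂ i, {y : Fin n → ℝ | if σ i then c i < f i y else f i y < c i} := by
      ext y; simp [OK, Set.mem_iInter]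
    rw [this]
    apply isOpen_iInter_of_finite
    intro i
    rcases hσ : σ i with _ | _ <;> simp only [hσ, if_true, if_false, Bool.false_eq_true]
    · exact isOpen_lt (hfc i) continuous_const
    · exact isOpen_lt continuous_const (hfc i)
  have hconv : ∀ σ : Fin d → Bool, Convex ℝ {y : Fin n → ℝ | OK f c σ y} := by
    intro σ
    have : {y : Fin n → ℝ | OK f c σ y}
        = ⋂ i, {y : Fin n → ℝ | if σ i then c i < f i y else f i y < c i} := by
      ext y; simp [OK, Set.mem_iInter]
    rw [this]
    apply convex_iInter
    intro i
    rcases hσ : σ i with _ | _ <;> simp only [hσ, if_true, if_false, Bool.false_eq_true]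
    · exact convex_halfSpace_lt (f i).isLinear (c i)
    · exact convex_halfSpace_gt (f i).isLinear (c i)
  -- the sign map
  have hOKself : ∀ x : ↥S, OK f c (fun i => decide (c i < f i x.1)) x.1 := by
    intro x i
    by_cases h : c i < f i x.1
    · simp [h]
    · have hne := x.2 i
      have : f i x.1 < c i := lt_of_le_of_ne (not_lt.1 h) hne
      simp [h, this]
  have hsgn_eq : ∀ (σ : Fin d → Bool) (y : Fin n → ℝ), OK f c σ y →
      (fun i => decide (c i < f i y)) = σ := by
    intro σ y hy
    funext i
    have := hy i
    rcases hσ : σ i with _ | _ <;> rw [hσ] at this <;>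
      simp only [if_true, if_false, Bool.false_eq_true] at this
    · simp [not_lt.2 (le_of_lt this)]
    · simp [this]
  let sgn : ↥S → {σ : Fin d → Bool // Realizable f c σ} :=
    fun x => ⟨fun i => decide (c i < f i x.1), ⟨x.1, hOKself x⟩⟩
  have hsgn_cont : Continuous sgn := by
    apply IsLocallyConstant.continuous
    rw [IsLocallyConstant.iff_exists_open]
    intro x
    refine ⟨Subtype.val ⁻¹' {y | OK f c (fun i => decide (c i < f i x.1)) y},
      (hopen _).preimage continuous_subtype_val, hOKself x, ?_⟩
    intro y hy
    apply Subtype.ext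
    exact hsgn_eq _ y.1 hy
  have hsame : ∀ (x y : ↥S) (σ : Fin d → Bool), OK f c σ x.1 → OK f c σ y.1 →
      (ConnectedComponents.mk x) = ConnectedComponents.mk y := by
    intro x y σ hx hy
    have hpre : IsPreconnected (Subtype.val ⁻¹' {z : Fin n → ℝ | OK f c σ z} : Set ↥S) := by
      rw [← Topology.IsInducing.subtypeVal.isPreconnected_image]
      have himg : (Subtype.val '' (Subtype.val ⁻¹' {z : Fin n → ℝ | OK f c σ z} : Set ↥S))
          = {z : Fin n → ℝ | OK f c σ z} := by
        rw [Set.image_preimage_eq_inter_range, Subtype.range_val]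
        exact Set.inter_eq_left.2 (fun z hz => hregionS σ z hz)
      rw [himg]
      exact (hconv σ).isPreconnected
    rw [ConnectedComponents.coe_eq_coe]
    have hsub := hpre.subset_connectedComponent (show x ∈ _ from hx)
    have hy' : y ∈ connectedComponent x := hsub (show y ∈ _ from hy)
    exact connectedComponent_eq hy'
  have hbij : Function.Bijective hsgn_cont.connectedComponentsLift := by
    constructor
    · intro a b hab
      obtain ⟨x, rfl⟩ := ConnectedComponents.surjective_coe a
      obtain ⟨y, rfl⟩ := ConnectedComponents.surjective_coe b
      rw [Continuous.connectedComponentsLift_apply_coe,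
        Continuous.connectedComponentsLift_apply_coe] at hab
      have hxy : (fun i => decide (c i < f i x.1)) = (fun i => decide (c i < f i y.1)) :=
        congrArg Subtype.val hab
      exact hsame x y _ (hOKself x) (hxy ▸ hOKself y)
    · rintro ⟨σ, z, hz⟩
      refine ⟨ConnectedComponents.mk ⟨z, hregionS σ z hz⟩, ?_⟩
      rw [Continuous.connectedComponentsLift_apply_coe]
      exact Subtype.ext (hsgn_eq σ z hz)
  exact Nat.card_congr (Equiv.ofBijective _ hbij)

end Arr

/-- The number of connected components of the complement in `ℝⁿ` of an
arrangement of `d` hyperplanes in general position equals `∑_{k=0}^{n} binom(d,k)`.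
General position: any `k ≤ n` of the hyperplanes intersect in a (nonempty) affine subspace
of dimension `n - k`, and any `n + 1` of them have empty intersection. -/
theorem card_components_general_position_arrangement
    (n d : ℕ) (f : Fin d → ((Fin n → ℝ) →ₗ[ℝ] ℝ)) (c : Fin d → ℝ)
    (hgen₁ : ∀ s : Finset (Fin d), s.card ≤ n →
      ({x : Fin n → ℝ | ∀ i ∈ s, f i x = c i}.Nonempty
        ∧ finrank ℝ ↥(⨅ i ∈ s, LinearMap.ker (f i)) = n - s.card))
    (hgen₂ : ∀ s : Finset (Fin d), s.card = n + 1 →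
      {x : Fin n → ℝ | ∀ i ∈ s, f i x = c i} = ∅) :
    Nat.card (ConnectedComponents ↥{x : Fin n → ℝ | ∀ i, f i x ≠ c i})
      = ∑ k ∈ Finset.range (n + 1), d.choose k := by
  have hfr : finrank ℝ (Fin n → ℝ) = n := by
    simp [Module.finrank_fintype_fun_eq_card]
  calc Nat.card (ConnectedComponents ↥{x : Fin n → ℝ | ∀ i, f i x ≠ c i})
      = Nat.card {σ : Fin d → Bool // Arr.Realizable f c σ} := Arr.components_eq_signs n d f c
    _ = ∑ k ∈ Finset.range (finrank ℝ (Fin n → ℝ) + 1), d.choose k := by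
        apply Arr.count d (Fin n → ℝ) f c
        · intro s hs
          rw [hfr] at hs ⊢
          exact hgen₁ s hs
        · intro s hs
          rw [hfr] at hs
          exact hgen₂ s hs
    _ = ∑ k ∈ Finset.range (n + 1), d.choose k := by rw [hfr]
end
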